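/- Among all stable configurations in a given linear equivalence class, the critical configuration is the unique greatest element with respect to the order ⪯_CFG defined by a ⪯_CFG b iff aΔ⁻¹ ⪯ bΔ⁻¹ componentwise. -/

import Mathlib

/-- A finite directed multigraph without loops on `Fin (n+1)` with global sink `Fin.last n`. -/
structure SinkDigraph (n : ℕ) where
  e : Fin (n + 1) → Fin (n + 1) → ℕ
  loopless : ∀ i, e i i = 0
  sink_no_out : ∀ j, e (Fin.last n) j = 0
  path_to_sink : ∀ i, Relation.ReflTransGen (fun u v => 0 < e u v) i (Fin.last n)

namespace SinkDigraph

variable {n : ℕ}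

/-- Out-degree of a vertex. -/
def outDeg (G : SinkDigraph n) (i : Fin (n + 1)) : ℕ := ∑ j, G.e i j

/-- The (full) Laplacian matrix over ℤ. -/
def lap (G : SinkDigraph n) : Matrix (Fin (n + 1)) (Fin (n + 1)) ℤ :=
  Matrix.of fun i j => if i = j then (G.outDeg i : ℤ) else -(G.e i j : ℤ)

/-- The reduced Laplacian (rows/columns of the sink removed). -/
def redLap (G : SinkDigraph n) : Matrix (Fin n) (Fin n) ℤ :=
  Matrix.of fun i j => G.lap i.castSucc j.castSucc

/-- The reduced Laplacian over ℚ. -/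
def redLapQ (G : SinkDigraph n) : Matrix (Fin n) (Fin n) ℚ :=
  (G.redLap).map (Int.cast : ℤ → ℚ)

/-- A ℕ-script viewed as integer vector. -/
def natScript (σ : Fin n → ℕ) : Fin n → ℤ := fun i => (σ i : ℤ)

/-- Result of firing vertex `i` in configuration `a`. -/
def fire (G : SinkDigraph n) (a : Fin n → ℤ) (i : Fin n) : Fin n → ℤ :=
  fun j => a j - G.redLap i j

/-- Result of firing a sequence of vertices. -/
def applySeq (G : SinkDigraph n) : (Fin n → ℤ) → List (Fin n) → (Fin n → ℤ)
  | a, [] => a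
  | a, i :: s => G.applySeq (G.fire a i) s

/-- A firing sequence is legal from `a` if every fired vertex is active when fired. -/
def Legal (G : SinkDigraph n) : (Fin n → ℤ) → List (Fin n) → Prop
  | _, [] => True
  | a, i :: s => G.redLap i i ≤ a i ∧ G.Legal (G.fire a i) s

/-- The firing script of a firing sequence. -/
def script (s : List (Fin n)) : Fin n → ℤ := fun i => (s.count i : ℤ)

/-- A configuration is stable if it is non-negative and no vertex is active. -/
def IsStable (G : SinkDigraph n) (a : Fin n → ℤ) : Prop :=
  ∀ i, 0 ≤ a i ∧ a i < G.redLap i i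

/-- `b` is the stabilization of `a`. -/
def Stabilizes (G : SinkDigraph n) (a b : Fin n → ℤ) : Prop :=
  ∃ s : List (Fin n), G.Legal a s ∧ G.applySeq a s = b ∧ G.IsStable b

/-- The maximal stable configuration `c_max`. -/
def cmax (G : SinkDigraph n) : Fin n → ℤ := fun i => (G.outDeg i.castSucc : ℤ) - 1

/-- A stable configuration is critical if it is the stabilization of `c_max + c`
for some non-negative `c`. -/
def IsCritical (G : SinkDigraph n) (a : Fin n → ℤ) : Prop :=
  ∃ c : Fin n → ℤ, 0 ≤ c ∧ G.Stabilizes (G.cmax + c) a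

/-- `σΔ ≻ 0`, i.e. `σΔ` is non-negative and non-zero. -/
def GPositive (G : SinkDigraph n) (σ : Fin n → ℕ) : Prop :=
  0 ≤ Matrix.vecMul (natScript σ) G.redLap ∧ Matrix.vecMul (natScript σ) G.redLap ≠ 0

/-- Reachability along directed edges. -/
def Reach (G : SinkDigraph n) : Fin (n + 1) → Fin (n + 1) → Prop :=
  Relation.ReflTransGen (fun u v => 0 < G.e u v)

/-- A source component: a strongly connected component with no in-going edge from outside. -/
def IsSourceComponent (G : SinkDigraph n) (S : Set (Fin (n + 1))) : Prop :=
  (∃ i, S = {j | G.Reach i j ∧ G.Reach j i}) ∧ ∀ j ∉ S, ∀ k ∈ S, G.e j k = 0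

/-- A `G`-strongly positive script. -/
def GStronglyPositive (G : SinkDigraph n) (σ : Fin n → ℕ) : Prop :=
  G.GPositive σ ∧ ∀ S : Set (Fin (n + 1)), G.IsSourceComponent S →
    ∃ i : Fin n, i.castSucc ∈ S ∧ Matrix.vecMul (natScript σ) G.redLap i ≠ 0

/-- Linear equivalence of configurations. -/
def Equiv (G : SinkDigraph n) (a b : Fin n → ℤ) : Prop :=
  ∃ σ : Fin n → ℤ, b - a = Matrix.vecMul σ G.redLap

/-- The weight of a configuration. -/
def weight (a : Fin n → ℤ) : ℤ := ∑ i, a i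

/-- The energy (CFG) order: compare energy vectors `aΔ⁻¹` componentwise over ℚ. -/
def cfgLE (G : SinkDigraph n) (a b : Fin n → ℤ) : Prop :=
  Matrix.vecMul (fun i => (a i : ℚ)) (G.redLapQ)⁻¹ ≤
    Matrix.vecMul (fun i => (b i : ℚ)) (G.redLapQ)⁻¹

/-- A non-negative configuration is superstable if reverse-firing any nonzero ℕ-script
produces a negative component. -/
def IsSuperstable (G : SinkDigraph n) (a : Fin n → ℤ) : Prop :=
  0 ≤ a ∧ ∀ σ : Fin n → ℕ, σ ≠ 0 →
    ∃ i, a i - Matrix.vecMul (natScript σ) G.redLap i < 0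

end SinkDigraph

open SinkDigraph Matrix

namespace SinkDigraph

variable {n : ℕ} (G : SinkDigraph n)

lemma redLap_diag (i : Fin n) : G.redLap i i = (G.outDeg i.castSucc : ℤ) := by
  simp [redLap, lap]

lemma redLap_off {i j : Fin n} (h : i ≠ j) :
    G.redLap i j = -(G.e i.castSucc j.castSucc : ℤ) := by
  simp [redLap, lap, Fin.castSucc_inj, h]

lemma redLap_eq (i j : Fin n) :
    G.redLap i j = (if i = j then (G.outDeg i.castSucc : ℤ) else 0)
      - (G.e i.castSucc j.castSucc : ℤ) := by
  by_cases h : i = j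
  · subst h; simp [redLap_diag, G.loopless]
  · simp [redLap_off _ h, h]

/-- Inverse positivity (M-matrix property): `Δ x ≥ 0` implies `x ≥ 0`, over ℚ. -/
lemma mulVec_nonneg {x : Fin n → ℚ} (hx : 0 ≤ G.redLapQ.mulVec x) : 0 ≤ x := by
  by_contra hneg
  rw [Pi.le_def] at hneg
  push_neg at hneg
  obtain ⟨i₀, hi₀⟩ := hneg
  have hne : (Finset.univ : Finset (Fin n)).Nonempty := ⟨i₀, Finset.mem_univ _⟩
  set m : ℚ := Finset.univ.inf' hne x with hm
  have hmle : ∀ j : Fin n, m ≤ x j := fun j => Finset.inf'_le x (Finset.mem_univ j)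
  have hmneg : m < 0 := lt_of_le_of_lt (hmle i₀) hi₀
  -- extend x to all vertices, with value 0 at the sink
  set y : Fin (n + 1) → ℚ := Fin.lastCases 0 x with hy
  have hylast : y (Fin.last n) = 0 := by simp [hy]
  have hycast : ∀ j : Fin n, y j.castSucc = x j := fun j => by simp [hy]
  -- one step: minimality propagates along edges
  have step : ∀ u v : Fin (n + 1), 0 < G.e u v → y u = m → y v = m := by
    intro u v huv hyu
    have hunl : u ≠ Fin.last n := by
      intro h; rw [h, G.sink_no_out] at huv; exact lt_irrefl 0 huv
    obtain ⟨u', rfl⟩ := Fin.exists_castSucc_eq.2 hunl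
    rw [hycast u'] at hyu
    -- the mulVec inequality at u'
    have hrow : 0 ≤ (G.redLapQ.mulVec x) u' := hx u'
    have hexp : (G.redLapQ.mulVec x) u'
        = (G.outDeg u'.castSucc : ℚ) * m
          - ∑ j : Fin n, (G.e u'.castSucc j.castSucc : ℚ) * x j := by
      rw [Matrix.mulVec, dotProduct]
      have : ∀ j : Fin n, G.redLapQ u' j * x j
          = (if u' = j then (G.outDeg u'.castSucc : ℚ) else 0) * x j
            - (G.e u'.castSucc j.castSucc : ℚ) * x j := by
        intro j
        rw [redLapQ, Matrix.map_apply, redLap_eq]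
        push_cast
        rcases eq_or_ne u' j with rfl | h
        · simp
          ring
        · simp [h]
      have this2 : ∀ j : Fin n, G.redLapQ u' j * x j
          = (if u' = j then (G.outDeg u'.castSucc : ℚ) * x j else 0)
            - (G.e u'.castSucc j.castSucc : ℚ) * x j := by
        intro j
        rw [this j]
        by_cases h : u' = j <;> simp [h]
      rw [Finset.sum_congr rfl fun j _ => this2 j, Finset.sum_sub_distrib]
      congr 1
      rw [Finset.sum_ite_eq (Finset.univ) u' (fun j => (G.outDeg u'.castSucc : ℚ) * x j)]
      simp [hyu]
    -- outdeg splits as sum over non-sink targets plus edges to sink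
    have hdeg : (G.outDeg u'.castSucc : ℚ)
        = (∑ j : Fin n, (G.e u'.castSucc j.castSucc : ℚ))
          + (G.e u'.castSucc (Fin.last n) : ℚ) := by
      rw [outDeg]
      push_cast
      rw [Fin.sum_univ_castSucc]
    have hsum : ∑ j : Fin n, (G.e u'.castSucc j.castSucc : ℚ) * x j
        ≤ (G.outDeg u'.castSucc : ℚ) * m := by linarith [hrow, hexp.symm.le, hexp.le]
    have hterm : ∀ j : Fin n, 0 ≤ (G.e u'.castSucc j.castSucc : ℚ) * (x j - m) :=
      fun j => mul_nonneg (by positivity) (by linarith [hmle j])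
    have hsum2 : ∑ j : Fin n, (G.e u'.castSucc j.castSucc : ℚ) * (x j - m)
        ≤ m * (G.e u'.castSucc (Fin.last n) : ℚ) := by
      have : ∑ j : Fin n, (G.e u'.castSucc j.castSucc : ℚ) * (x j - m)
          = (∑ j : Fin n, (G.e u'.castSucc j.castSucc : ℚ) * x j)
            - (∑ j : Fin n, (G.e u'.castSucc j.castSucc : ℚ)) * m := by
        rw [Finset.sum_mul, ← Finset.sum_sub_distrib]
        exact Finset.sum_congr rfl fun j _ => by ring
      rw [this]
      nlinarith [hsum, hdeg]
    have hsumnn : 0 ≤ ∑ j : Fin n, (G.e u'.castSucc j.castSucc : ℚ) * (x j - m) :=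
      Finset.sum_nonneg fun j _ => hterm j
    have hlast0 : (G.e u'.castSucc (Fin.last n) : ℚ) = 0 := by nlinarith
    have hsum0 : ∑ j : Fin n, (G.e u'.castSucc j.castSucc : ℚ) * (x j - m) = 0 := by
      nlinarith
    -- v can't be the sink
    rcases eq_or_ne v (Fin.last n) with hvl | hvl
    · exfalso
      rw [hvl] at huv
      have : (0:ℚ) < (G.e u'.castSucc (Fin.last n) : ℚ) := by exact_mod_cast huv
      rw [hlast0] at this; exact lt_irrefl _ this
    obtain ⟨v', rfl⟩ := Fin.exists_castSucc_eq.2 hvl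
    have := (Finset.sum_eq_zero_iff_of_nonneg (fun j _ => hterm j)).1 hsum0 v'
      (Finset.mem_univ v')
    have hev : (0:ℚ) < (G.e u'.castSucc v'.castSucc : ℚ) := by exact_mod_cast huv
    have hxv : x v' = m := by
      rcases mul_eq_zero.1 this with h | h
      · exact absurd h (ne_of_gt hev)
      · linarith
    rw [hycast v', hxv]
  -- propagate along a path to the sink
  have reach : ∀ u v : Fin (n + 1),
      Relation.ReflTransGen (fun a b => 0 < G.e a b) u v → y u = m → y v = m := by
    intro u v h
    induction h with
    | refl => exact id
    | tail _ hbc ih => intro hu; exact step _ _ hbc (ih hu)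
  obtain ⟨i', _, hmin⟩ := Finset.exists_mem_eq_inf' hne x
  have hyi : y i'.castSucc = m := by rw [hycast]; exact hmin.symm
  have := reach _ _ (G.path_to_sink i'.castSucc) hyi
  rw [hylast] at this
  exact absurd this.symm (ne_of_lt hmneg)

lemma redLapQ_isUnit_det : IsUnit G.redLapQ.det := by
  rw [isUnit_iff_ne_zero]
  intro hdet
  obtain ⟨v, hv, hmv⟩ := (Matrix.exists_mulVec_eq_zero_iff).2 hdet
  have h1 : 0 ≤ v := G.mulVec_nonneg (by rw [hmv])
  have h2 : 0 ≤ -v := G.mulVec_nonneg (x := -v) (by rw [Matrix.mulVec_neg, hmv, neg_zero])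
  exact hv (funext fun i => le_antisymm (by simpa using h2 i) (h1 i))

lemma redLapQ_inv_nonneg (i j : Fin n) : 0 ≤ (G.redLapQ)⁻¹ i j := by
  have hx : G.redLapQ.mulVec (fun k => (G.redLapQ)⁻¹ k j)
      = fun i => (G.redLapQ * (G.redLapQ)⁻¹) i j :=
    funext fun i => by rw [Matrix.mul_apply]; rfl
  have h1 : G.redLapQ * (G.redLapQ)⁻¹ = 1 := Matrix.mul_nonsing_inv _ G.redLapQ_isUnit_det
  have : 0 ≤ fun k => (G.redLapQ)⁻¹ k j := by
    apply G.mulVec_nonneg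
    rw [hx, h1]
    intro k
    simp only [Matrix.one_apply]
    split <;> norm_num
  exact this i

lemma vecMul_nonneg_of {y : Fin n → ℚ} (h : 0 ≤ Matrix.vecMul y G.redLapQ) : 0 ≤ y := by
  have hy : y = Matrix.vecMul (Matrix.vecMul y G.redLapQ) (G.redLapQ)⁻¹ := by
    rw [Matrix.vecMul_vecMul, Matrix.mul_nonsing_inv _ G.redLapQ_isUnit_det,
      Matrix.vecMul_one]
  rw [hy]
  intro j
  simp only [Pi.zero_apply, Matrix.vecMul, dotProduct]
  exact Finset.sum_nonneg fun i _ => mul_nonneg (h i) (G.redLapQ_inv_nonneg i j)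

/-- Casting a vecMul identity from ℤ to ℚ. -/
lemma cast_vecMul (σ : Fin n → ℤ) :
    Matrix.vecMul (fun i => (σ i : ℚ)) G.redLapQ
      = fun j => ((Matrix.vecMul σ G.redLap j : ℤ) : ℚ) := by
  funext j
  have := RingHom.map_vecMul (Int.castRingHom ℚ) G.redLap σ j
  simpa [redLapQ, Function.comp_def] using this.symm

lemma vecMul_int_nonneg {σ : Fin n → ℤ} (h : 0 ≤ Matrix.vecMul σ G.redLap) : 0 ≤ σ := by
  have hq : 0 ≤ Matrix.vecMul (fun i => (σ i : ℚ)) G.redLapQ := by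
    rw [cast_vecMul]
    intro j
    have := h j
    simp only [Pi.zero_apply] at this ⊢
    exact_mod_cast this
  have := G.vecMul_nonneg_of hq
  intro i
  have := this i
  simp only [Pi.zero_apply] at this ⊢
  exact_mod_cast this

/-- The unit vector at `i`. -/
def delta (i : Fin n) : Fin n → ℤ := fun j => if i = j then 1 else 0

lemma delta_vecMul (i : Fin n) :
    Matrix.vecMul (delta i) G.redLap = fun j => G.redLap i j := by
  funext j
  simp [Matrix.vecMul, dotProduct, delta, Finset.sum_ite_eq]

lemma fire_eq (a : Fin n → ℤ) (i : Fin n) :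
    G.fire a i = a - Matrix.vecMul (delta i) G.redLap := by
  rw [delta_vecMul]; rfl

lemma script_cons (i : Fin n) (s : List (Fin n)) :
    script (i :: s) = script s + delta i := by
  funext j
  simp only [script, delta, Pi.add_apply, List.count_cons, beq_iff_eq]
  rcases eq_or_ne i j with rfl | h
  · simp
  · simp [h, Ne.symm h]

lemma script_nonneg (s : List (Fin n)) : 0 ≤ script s := by
  intro j; simp [script]

lemma applySeq_eq (s : List (Fin n)) :
    ∀ a : Fin n → ℤ, G.applySeq a s = a - Matrix.vecMul (script s) G.redLap := by
  induction s with
  | nil =>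
    intro a
    have h0 : script ([] : List (Fin n)) = 0 := funext fun j => by simp [script]
    simp [applySeq, h0, Matrix.zero_vecMul]
  | cons i s ih =>
    intro a
    rw [applySeq, ih, fire_eq, script_cons, Matrix.add_vecMul]
    funext j
    simp only [Pi.sub_apply, Pi.add_apply]
    ring

/-- Least action principle. -/
lemma leastAction : ∀ (s : List (Fin n)) (x ρ : Fin n → ℤ), G.Legal x s → 0 ≤ ρ →
    G.IsStable (x - Matrix.vecMul ρ G.redLap) → script s ≤ ρ := by
  intro s
  induction s with
  | nil => intro x ρ _ hρ _ j; simp [script]; exact hρ j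
  | cons i s ih =>
    intro x ρ hleg hρ hst
    obtain ⟨hact, hleg'⟩ := hleg
    have hρi : 1 ≤ ρ i := by
      by_contra hcon
      push_neg at hcon
      have h0 : ρ i = 0 := le_antisymm (by omega) (hρ i)
      have hle : Matrix.vecMul ρ G.redLap i ≤ 0 := by
        rw [Matrix.vecMul, dotProduct]
        apply Finset.sum_nonpos
        intro k _
        rcases eq_or_ne k i with rfl | hk
        · rw [h0]; ring_nf; exact le_refl 0
        · have : G.redLap k i ≤ 0 := by
            rw [redLap_off _ hk]
            simp
          exact mul_nonpos_iff.2 (Or.inl ⟨hρ k, this⟩)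
      have hlt := (hst i).2
      simp only [Pi.sub_apply] at hlt
      omega
    have hρ' : 0 ≤ ρ - delta i := by
      intro j
      simp only [Pi.sub_apply, Pi.zero_apply, delta]
      rcases eq_or_ne i j with rfl | hj
      · simpa using hρi
      · simp [hj]; exact hρ j
    have hfix : G.fire x i - Matrix.vecMul (ρ - delta i) G.redLap
        = x - Matrix.vecMul ρ G.redLap := by
      rw [fire_eq, Matrix.sub_vecMul]
      funext j
      simp only [Pi.sub_apply]
      ring
    have hih := ih (G.fire x i) (ρ - delta i) hleg' hρ' (by rw [hfix]; exact hst)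
    rw [script_cons]
    intro j
    have := hih j
    simp only [Pi.add_apply, Pi.sub_apply] at this ⊢
    omega

/-- The key combinatorial fact: a critical configuration dominates every stable
configuration in its class, in the script order. -/
lemma crit_script_nonneg {a b : Fin n → ℤ} (ha : G.IsCritical a) (hb : G.IsStable b)
    {σ : Fin n → ℤ} (hσ : a - b = Matrix.vecMul σ G.redLap) : 0 ≤ σ := by
  obtain ⟨c, hc, s, hleg, happ, _⟩ := ha
  have hax : a = (G.cmax + c) - Matrix.vecMul (script s) G.redLap := by
    rw [← happ, applySeq_eq]
  set τ := script s with hτdef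
  set ρ := τ + σ with hρdef
  have hb' : G.cmax + c - Matrix.vecMul ρ G.redLap = b := by
    rw [hρdef, Matrix.add_vecMul]
    funext j
    have h1 : a j - b j = Matrix.vecMul σ G.redLap j := congrFun hσ j
    have h2 : a j = (G.cmax + c) j - Matrix.vecMul τ G.redLap j := congrFun hax j
    simp only [Pi.sub_apply, Pi.add_apply] at *
    omega
  have hρnn : 0 ≤ ρ := by
    apply G.vecMul_int_nonneg
    intro j
    have h1 : Matrix.vecMul ρ G.redLap j = (G.cmax + c) j - b j := by
      have := congrFun hb' j
      simp only [Pi.sub_apply] at this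
      omega
    have h2 : b j ≤ G.redLap j j - 1 := by have := (hb j).2; omega
    have h3 : G.redLap j j = (G.outDeg j.castSucc : ℤ) := redLap_diag G j
    have h4 : (G.cmax + c) j = (G.outDeg j.castSucc : ℤ) - 1 + c j := by
      simp [cmax]
    have h5 : 0 ≤ c j := hc j
    simp only [Pi.zero_apply]
    omega
  have hla := G.leastAction s (G.cmax + c) ρ hleg hρnn (by rw [hb']; exact hb)
  intro j
  have h1 := hla j
  have he : τ j = script s j := rfl
  simp only [hρdef, Pi.add_apply, Pi.zero_apply] at h1 ⊢
  omega

lemma cfgLE_of_script {a b : Fin n → ℤ} {σ : Fin n → ℤ} (hσnn : 0 ≤ σ)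
    (hσ : a - b = Matrix.vecMul σ G.redLap) : G.cfgLE b a := by
  intro j
  have hcast : (fun i => (a i : ℚ)) - (fun i => (b i : ℚ))
      = Matrix.vecMul (fun i => (σ i : ℚ)) G.redLapQ := by
    rw [cast_vecMul]
    funext k
    have := congrFun hσ k
    simp only [Pi.sub_apply] at this ⊢
    exact_mod_cast this
  have key : Matrix.vecMul (fun i => (a i : ℚ)) (G.redLapQ)⁻¹
      - Matrix.vecMul (fun i => (b i : ℚ)) (G.redLapQ)⁻¹
      = fun i => (σ i : ℚ) := by
    rw [← Matrix.sub_vecMul, hcast, Matrix.vecMul_vecMul,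
      Matrix.mul_nonsing_inv _ G.redLapQ_isUnit_det, Matrix.vecMul_one]
  have := congrFun key j
  simp only [Pi.sub_apply] at this
  have hj : (0:ℚ) ≤ (σ j : ℚ) := by exact_mod_cast hσnn j
  linarith

end SinkDigraph

theorem critical_cfg_greatest (n : ℕ) (G : SinkDigraph n) (a : Fin n → ℤ)
    (ha : G.IsCritical a) :
    (∀ b : Fin n → ℤ, G.IsStable b → G.Equiv a b → G.cfgLE b a) ∧
    (∀ b : Fin n → ℤ, G.IsStable b → G.Equiv a b →
      (∀ c : Fin n → ℤ, G.IsStable c → G.Equiv a c → G.cfgLE c b) → b = a) := by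
  have hstA : G.IsStable a := by
    obtain ⟨c, _, s, _, _, hst⟩ := ha
    exact hst
  have part1 : ∀ b : Fin n → ℤ, G.IsStable b → G.Equiv a b → G.cfgLE b a := by
    intro b hb ⟨σ, hσ⟩
    have hσ' : a - b = Matrix.vecMul (-σ) G.redLap := by
      rw [Matrix.neg_vecMul, ← hσ]
      funext j; simp only [Pi.sub_apply, Pi.neg_apply]; ring
    exact G.cfgLE_of_script (G.crit_script_nonneg ha hb hσ') hσ'
  refine ⟨part1, ?_⟩
  intro b hb hab hmax
  have h1 : G.cfgLE b a := part1 b hb hab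
  have h2 : G.cfgLE a b := hmax a hstA ⟨0, by simp [Matrix.zero_vecMul]⟩
  have heq : Matrix.vecMul (fun i => (b i : ℚ)) (G.redLapQ)⁻¹
      = Matrix.vecMul (fun i => (a i : ℚ)) (G.redLapQ)⁻¹ := le_antisymm h1 h2
  have hba : (fun i => (b i : ℚ)) = fun i => (a i : ℚ) := by
    have := congrArg (fun v => Matrix.vecMul v G.redLapQ) heq
    simpa [Matrix.vecMul_vecMul,
      Matrix.nonsing_inv_mul _ G.redLapQ_isUnit_det, Matrix.vecMul_one] using this
  funext i
  have := congrFun hba i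
  exact_mod_cast this
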